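/- Let N ≥ 3 be an integer and k₁,k₂ ∈ ℤ with gcd(k₁,k₂,N) = 1. Then there exist γ ∈ Γ(2) and a pair (u,v) ∈ {(1,0),(0,1),(1,1)} such that (k₂,k₁) ≡ (u,v)·γ (mod N) componentwise, i.e., writing γ = [[a,b],[c,d]], one has k₂ ≡ ua + vc (mod N) and k₁ ≡ ub + vd (mod N). -/

import Mathlib

/-- Key lifting lemma: shift `a` by a multiple of `M` to become coprime to `b`. -/
lemma exists_coprime_shift (a b M : ℤ) (hb : b ≠ 0)
    (h : Int.gcd a (Int.gcd b M) = 1) : ∃ t : ℤ, Int.gcd (a + t * M) b = 1 := by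
  classical
  set S : Finset ℕ := b.natAbs.primeFactors.filter (fun p => ¬ (p : ℤ) ∣ a) with hS
  set tn : ℕ := S.prod id with htn
  refine ⟨(tn : ℤ), ?_⟩
  by_contra hg
  obtain ⟨p, hp, hpd⟩ := Nat.exists_prime_and_dvd hg
  have hpx : (p : ℤ) ∣ a + (tn : ℤ) * M := by
    exact dvd_trans (Int.natCast_dvd_natCast.mpr hpd) (Int.gcd_dvd_left _ _)
  have hpb : (p : ℤ) ∣ b := by
    exact dvd_trans (Int.natCast_dvd_natCast.mpr hpd) (Int.gcd_dvd_right _ _)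
  by_cases hpa : (p : ℤ) ∣ a
  · have hptM : (p : ℤ) ∣ (tn : ℤ) * M := by
      have := dvd_sub hpx hpa
      simpa using this
    have hpZ : Prime ((p : ℤ)) := Nat.prime_iff_prime_int.mp hp
    rcases hpZ.dvd_mul.mp hptM with hpt | hpM
    · -- p ∣ tn, but every prime factor of tn does not divide a
      have hptn : p ∣ tn := Int.natCast_dvd_natCast.mp hpt
      obtain ⟨q, hqS, hpq⟩ := hp.prime.exists_mem_finset_dvd (by simpa [htn] using hptn)
      have hq := Finset.mem_filter.mp hqS
      have hqprime : q.Prime := (Nat.mem_primeFactors.mp hq.1).1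
      have : p = q := (Nat.prime_dvd_prime_iff_eq hp hqprime).mp hpq
      exact hq.2 (this ▸ hpa)
    · have h1 : (p : ℤ) ∣ (Int.gcd b M : ℤ) := Int.dvd_coe_gcd hpb hpM
      have h2 : (p : ℤ) ∣ (Int.gcd a (Int.gcd b M) : ℤ) := Int.dvd_coe_gcd hpa h1
      rw [h] at h2
      have := Int.le_of_dvd one_pos h2
      have := hp.two_le
      omega
  · -- p ∈ S, so p ∣ tn, hence p ∣ a, contradiction
    have hpS : p ∈ S := by
      refine Finset.mem_filter.mpr ⟨Nat.mem_primeFactors.mpr ⟨hp, ?_, by simpa using hb⟩, hpa⟩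
      rw [← Int.natAbs_natCast p]
      exact Int.natAbs_dvd_natAbs.mpr hpb
    have hptn : p ∣ tn := by simpa [htn] using Finset.dvd_prod_of_mem id hpS
    have hpt : (p : ℤ) ∣ (tn : ℤ) * M := (Int.natCast_dvd_natCast.mpr hptn).mul_right M
    have : (p : ℤ) ∣ a := by
      have := dvd_sub hpx hpt
      simpa using this
    exact hpa this

/-- Bezout with parity control: if `gcd(x,y)=1` and `x` is odd, there are `c` even, `d` odd
with `x*d - y*c = 1`. -/
lemma bezout_parity (x y : ℤ) (h : Int.gcd x y = 1) (hx : ¬ (2 : ℤ) ∣ x) :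
    ∃ c d : ℤ, x * d - y * c = 1 ∧ (2 : ℤ) ∣ c ∧ ¬ (2 : ℤ) ∣ d := by
  obtain ⟨u, v, huv⟩ := Int.isCoprime_iff_gcd_eq_one.mpr h
  refine ⟨-v * (1 + x), u - y * v, by linear_combination huv, ?_, ?_⟩
  · have : (2 : ℤ) ∣ (1 + x) := by omega
    exact this.mul_left _
  · intro hd
    have h1 : (2 : ℤ) ∣ x * (u - y * v) := hd.mul_left x
    have h2 : (2 : ℤ) ∣ y * (-v * (1 + x)) := by
      have : (2 : ℤ) ∣ (1 + x) := by omega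
      exact ((this.mul_left (-v)).mul_left y)
    have : (2 : ℤ) ∣ (1 : ℤ) := by
      have := dvd_sub h1 h2
      have heq : x * (u - y * v) - y * (-v * (1 + x)) = 1 := by linear_combination huv
      rwa [heq] at this
    omega

/-- `γ = [[a,b],[c,d]]` lies in the principal congruence subgroup `Γ(2)` of `SL(2,ℤ)`. -/
def InGammaTwo (a b c d : ℤ) : Prop :=
  a * d - b * c = 1 ∧ a ≡ 1 [ZMOD 2] ∧ b ≡ 0 [ZMOD 2] ∧ c ≡ 0 [ZMOD 2] ∧ d ≡ 1 [ZMOD 2]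

lemma odd_zmod2 {a : ℤ} (h : ¬ (2:ℤ) ∣ a) : a ≡ 1 [ZMOD 2] := by
  have : a % 2 = 1 % 2 := by omega
  exact this

lemma even_zmod2 {a : ℤ} (h : (2:ℤ) ∣ a) : a ≡ 0 [ZMOD 2] := by
  have : a % 2 = 0 % 2 := by omega
  exact this

/-- Step 1 of Lemma 3.3: for `N ≥ 3` and `gcd(k₁, k₂, N) = 1`, there exist `γ ∈ Γ(2)` and
`(u,v) ∈ {(1,0), (0,1), (1,1)}` with `(k₂, k₁) ≡ (u,v)·γ (mod N)` componentwise. -/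
theorem torsion_equiv_basic (N : ℕ) (hN : 3 ≤ N) (k₁ k₂ : ℤ)
    (hgcd : Int.gcd k₁ (Int.gcd k₂ (N : ℤ)) = 1) :
    ∃ a b c d : ℤ, InGammaTwo a b c d ∧
      ∃ uv ∈ ({(1, 0), (0, 1), (1, 1)} : Set (ℤ × ℤ)),
        k₂ ≡ uv.1 * a + uv.2 * c [ZMOD (N : ℤ)] ∧ k₁ ≡ uv.1 * b + uv.2 * d [ZMOD (N : ℤ)] := by
  classical
  have hN0 : (3 : ℤ) ≤ (N : ℤ) := by exact_mod_cast hN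
  set M : ℤ := 2 * (N : ℤ) with hM
  set r₂ : ℤ := if (2:ℤ) ∣ k₂ ∧ (2:ℤ) ∣ k₁ then k₂ + (N : ℤ) else k₂ with hr₂
  set b' : ℤ := if k₁ = 0 then M else k₁ with hb'def
  have hb' : b' ≠ 0 := by
    rw [hb'def]; split <;> [skip; assumption] ; omega
  -- not both r₂ and b' are even
  have hNodd : ((2:ℤ) ∣ k₂ ∧ (2:ℤ) ∣ k₁) → ¬ (2:ℤ) ∣ (N:ℤ) := by
    rintro ⟨h2, h1⟩ hNN
    have hd : (2:ℤ) ∣ (Int.gcd k₁ (Int.gcd k₂ (N:ℤ)) : ℤ) :=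
      Int.dvd_coe_gcd h1 (Int.dvd_coe_gcd h2 hNN)
    rw [hgcd] at hd
    omega
  have hpar : ¬ ((2:ℤ) ∣ r₂ ∧ (2:ℤ) ∣ b') := by
    rintro ⟨h2, h1⟩
    by_cases hc : (2:ℤ) ∣ k₂ ∧ (2:ℤ) ∣ k₁
    · have := hNodd hc
      rw [hr₂, if_pos hc] at h2
      have := hc.1
      omega
    · rw [hr₂, if_neg hc] at h2
      rw [hb'def] at h1
      by_cases hk1 : k₁ = 0
      · rw [if_pos hk1] at h1
        exact hc ⟨h2, by omega⟩
      · rw [if_neg hk1] at h1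
        exact hc ⟨h2, h1⟩
  -- gcd condition for the shift lemma
  have hg : Int.gcd r₂ (Int.gcd b' M) = 1 := by
    by_contra hne
    obtain ⟨p, hp, hpd⟩ := Nat.exists_prime_and_dvd hne
    have hpr : (p : ℤ) ∣ r₂ :=
      dvd_trans (Int.natCast_dvd_natCast.mpr hpd) (Int.gcd_dvd_left _ _)
    have hpg : (p : ℤ) ∣ (Int.gcd b' M : ℤ) :=
      dvd_trans (Int.natCast_dvd_natCast.mpr hpd) (Int.gcd_dvd_right _ _)
    have hpb : (p : ℤ) ∣ b' := dvd_trans hpg (Int.gcd_dvd_left _ _)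
    have hpM : (p : ℤ) ∣ M := dvd_trans hpg (Int.gcd_dvd_right _ _)
    have hpZ : Prime ((p : ℤ)) := Nat.prime_iff_prime_int.mp hp
    rcases hpZ.dvd_mul.mp (hM ▸ hpM) with hp2 | hpN
    · -- p = 2
      have hp2' : p = 2 := by
        have := Int.le_of_dvd (by norm_num) hp2
        have := hp.two_le
        omega
      rw [hp2'] at hpr hpb
      exact hpar ⟨by exact_mod_cast hpr, by exact_mod_cast hpb⟩
    · -- p ∣ N, derive p ∣ k₂ and p ∣ k₁
      have hpk2 : (p : ℤ) ∣ k₂ := by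
        rw [hr₂] at hpr
        by_cases hc : (2:ℤ) ∣ k₂ ∧ (2:ℤ) ∣ k₁
        · rw [if_pos hc] at hpr
          have := dvd_sub hpr hpN
          simpa using this
        · rwa [if_neg hc] at hpr
      have hpk1 : (p : ℤ) ∣ k₁ := by
        rw [hb'def] at hpb
        by_cases hk1 : k₁ = 0
        · simp [hk1]
        · rwa [if_neg hk1] at hpb
      have hd : (p:ℤ) ∣ (Int.gcd k₁ (Int.gcd k₂ (N:ℤ)) : ℤ) :=
        Int.dvd_coe_gcd hpk1 (Int.dvd_coe_gcd hpk2 hpN)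
      rw [hgcd] at hd
      have := Int.le_of_dvd one_pos hd
      have := hp.two_le
      omega
  obtain ⟨t, ht⟩ := exists_coprime_shift r₂ b' M hb' hg
  set x : ℤ := r₂ + t * M with hxdef
  set y : ℤ := b' with hydef
  -- congruences mod N
  have hxmod : x ≡ k₂ [ZMOD (N:ℤ)] := by
    refine Int.modEq_iff_dvd.mpr ?_
    rw [hxdef, hr₂, hM]
    split
    · exact ⟨-(1 + t * 2), by ring⟩
    · exact ⟨-(t * 2), by ring⟩
  have hymod : y ≡ k₁ [ZMOD (N:ℤ)] := by
    refine Int.modEq_iff_dvd.mpr ?_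
    rw [hb'def, hM]
    split
    · rename_i h0; rw [h0]; exact ⟨-2, by ring⟩
    · simp
  -- parity of x equals parity of r₂
  have hxpar : ¬ ((2:ℤ) ∣ x ∧ (2:ℤ) ∣ y) := by
    rintro ⟨h2, h1⟩
    have htM : (2:ℤ) ∣ t * M := ⟨t * (N:ℤ), by rw [hM]; ring⟩
    obtain ⟨m, hm⟩ := htM
    have : (2:ℤ) ∣ r₂ := by
      rw [hxdef, hm] at h2
      omega
    exact hpar ⟨this, h1⟩
  by_cases hx2 : (2:ℤ) ∣ x
  · -- then y is odd : use bottom row (x, y), uv = (0,1)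
    have hy2 : ¬ (2:ℤ) ∣ y := fun h => hxpar ⟨hx2, h⟩
    obtain ⟨c, d, hdet, hc, hd⟩ := bezout_parity y x (by rw [Int.gcd_comm]; exact ht) hy2
    refine ⟨d, c, x, y, ⟨by linear_combination hdet, odd_zmod2 hd, even_zmod2 hc,
      even_zmod2 hx2, odd_zmod2 hy2⟩, (0, 1), by simp, ?_, ?_⟩
    · have : (0:ℤ) * d + 1 * x = x := by ring
      rw [this]; exact hxmod.symm
    · have : (0:ℤ) * c + 1 * y = y := by ring
      rw [this]; exact hymod.symm
  · obtain ⟨c, d, hdet, hc, hd⟩ := bezout_parity x y ht hx2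
    by_cases hy2 : (2:ℤ) ∣ y
    · -- top row (x, y), uv = (1,0)
      refine ⟨x, y, c, d, ⟨by linear_combination hdet, odd_zmod2 hx2, even_zmod2 hy2,
        even_zmod2 hc, odd_zmod2 hd⟩, (1, 0), by simp, ?_, ?_⟩
      · have : (1:ℤ) * x + 0 * c = x := by ring
        rw [this]; exact hxmod.symm
      · have : (1:ℤ) * y + 0 * d = y := by ring
        rw [this]; exact hymod.symm
    · -- both odd: rows sum to (x, y), uv = (1,1)
      refine ⟨x - c, y - d, c, d, ⟨by linear_combination hdet, odd_zmod2 (by omega),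
        even_zmod2 (by omega), even_zmod2 hc, odd_zmod2 hd⟩, (1, 1), by simp, ?_, ?_⟩
      · have : (1:ℤ) * (x - c) + 1 * c = x := by ring
        rw [this]; exact hxmod.symm
      · have : (1:ℤ) * (y - d) + 1 * d = y := by ring
        rw [this]; exact hymod.symm
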